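/- arXiv:2505.08185 — 2 statements merged into one kernel-verified Lean document; each statement's English description precedes it below -/
import Mathlib

section
/- Every non-complete 3-connected simple graph with infinitely many vertices contains a contractible non-edge. -/
open SimpleGraph

variable {V : Type*}

/-- A (possibly infinite) graph is `k`-connected: it has at least `k+1` vertices,
and removing any finite set of fewer than `k` vertices leaves a connected graph. -/
def KConnectedGen (k : ℕ) (G : SimpleGraph V) : Prop :=
  (∃ s : Finset V, s.card = k + 1) ∧
    ∀ S : Set V, S.Finite → S.ncard < k → (G.induce Sᶜ).Connected

/-- Contraction of the non-edge `{u, v}`: `u` and `v` are replaced by a single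
vertex (represented here by `u`), adjacent to every vertex that was adjacent to
`u` or to `v`. -/
def contractNonEdge (G : SimpleGraph V) (u v : V) : SimpleGraph {w : V // w ≠ v} where
  Adj a b := a ≠ b ∧ (G.Adj a.1 b.1 ∨ (a.1 = u ∧ G.Adj v b.1) ∨ (b.1 = u ∧ G.Adj a.1 v))
  symm := by
    refine ⟨?_⟩
    rintro a b ⟨hab, h | ⟨h1, h2⟩ | ⟨h1, h2⟩⟩
    · exact ⟨hab.symm, Or.inl h.symm⟩
    · exact ⟨hab.symm, Or.inr (Or.inr ⟨h1, h2.symm⟩)⟩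
    · exact ⟨hab.symm, Or.inr (Or.inl ⟨h1, h2.symm⟩)⟩
  loopless := ⟨fun a h => h.1 rfl⟩

namespace CNEAux

/-- `Avoid G S x y` : there is a walk from `x` to `y` avoiding the set `S`. -/
def Avoid (G : SimpleGraph V) (S : Set V) (x y : V) : Prop :=
  ∃ w : G.Walk x y, ∀ z ∈ w.support, z ∉ S

variable {G : SimpleGraph V} {S : Set V} {x y z : V}

lemma Avoid.left_notMem (h : Avoid G S x y) : x ∉ S := by
  obtain ⟨w, hw⟩ := h
  exact hw x w.start_mem_support

lemma Avoid.right_notMem (h : Avoid G S x y) : y ∉ S := by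
  obtain ⟨w, hw⟩ := h
  exact hw y w.end_mem_support

lemma avoid_refl (hx : x ∉ S) : Avoid G S x x :=
  ⟨Walk.nil, by simp [hx]⟩

lemma Avoid.symm (h : Avoid G S x y) : Avoid G S y x := by
  obtain ⟨w, hw⟩ := h
  exact ⟨w.reverse, fun z hz => hw z (by rwa [Walk.support_reverse, List.mem_reverse] at hz)⟩

lemma Avoid.trans (h : Avoid G S x y) (h' : Avoid G S y z) : Avoid G S x z := by
  obtain ⟨w, hw⟩ := h
  obtain ⟨w', hw'⟩ := h'
  refine ⟨w.append w', fun a ha => ?_⟩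
  rw [Walk.mem_support_append_iff] at ha
  exact ha.elim (hw a) (hw' a)

lemma avoid_of_adj (h : G.Adj x y) (hx : x ∉ S) (hy : y ∉ S) : Avoid G S x y :=
  ⟨Walk.cons h Walk.nil, by
    intro z hz
    simp only [Walk.support_cons, Walk.support_nil, List.mem_cons,
      List.not_mem_nil, or_false] at hz
    rcases hz with rfl | rfl
    · exact hx
    · exact hy⟩

lemma Avoid.mono {S' : Set V} (hS : S' ⊆ S) (h : Avoid G S x y) : Avoid G S' x y := by
  obtain ⟨w, hw⟩ := h
  exact ⟨w, fun z hz hz' => hw z hz (hS hz')⟩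

/-- reachability in the induced graph on `Sᶜ` is the same as `Avoid`. -/
lemma reachable_induce_iff_avoid (hx : x ∉ S) (hy : y ∉ S) :
    (G.induce Sᶜ).Reachable ⟨x, hx⟩ ⟨y, hy⟩ ↔ Avoid G S x y := by
  have key : ∀ (a b : ↥Sᶜ), (G.induce Sᶜ).Walk a b → Avoid G S a.1 b.1 := by
    intro a b w
    induction w with
    | @nil a => exact avoid_refl a.2
    | @cons a b c hab p ih =>
      exact Avoid.trans (avoid_of_adj hab a.2 b.2) ih
  constructor
  · intro h
    obtain ⟨w⟩ := h
    exact key _ _ w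
  · rintro ⟨w, hw⟩
    induction w with
    | nil => rfl
    | @cons a b c hab p ih =>
      have hb : b ∉ S := hw b (by simp)
      have ha : a ∉ S := hw a (by simp)
      exact Reachable.trans (Adj.reachable (by exact hab) :
          (G.induce Sᶜ).Reachable ⟨a, ha⟩ ⟨b, hb⟩)
        (ih hb hy (fun z hz => hw z (by simp [hz])))

lemma avoid_of_connected (hconn : (G.induce Sᶜ).Connected) (hx : x ∉ S) (hy : y ∉ S) :
    Avoid G S x y :=
  (reachable_induce_iff_avoid hx hy).mp (hconn.preconnected ⟨x, hx⟩ ⟨y, hy⟩)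

lemma connected_of_avoid (hne : ∃ x, x ∉ S) (h : ∀ a b, a ∉ S → b ∉ S → Avoid G S a b) :
    (G.induce Sᶜ).Connected := by
  obtain ⟨x0, hx0⟩ := hne
  haveI : Nonempty ↥Sᶜ := ⟨⟨x0, hx0⟩⟩
  refine ⟨fun a b => ?_⟩
  have := h a.1 b.1 a.2 b.2
  have := (reachable_induce_iff_avoid a.2 b.2).mpr this
  convert this <;> simp

lemma exists_not_avoid (hbad : ¬ (G.induce Sᶜ).Connected) (hne : ∃ x, x ∉ S) :
    ∃ a b, a ∉ S ∧ b ∉ S ∧ ¬ Avoid G S a b := by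
  by_contra h
  push_neg at h
  exact hbad (connected_of_avoid hne (fun a b ha hb => h a b ha hb))


/-- Prefix of an avoiding walk: if `s` lies on a walk from `x` to `y` avoiding `S`,
then `Avoid G S x s`. -/
lemma Avoid.to_support_mem {w : G.Walk x y} (hw : ∀ z ∈ w.support, z ∉ S)
    {s : V} (hs : s ∈ w.support) : Avoid G S x s := by
  classical
  exact ⟨w.takeUntil s hs, fun z hz => hw z (w.support_takeUntil_subset hs hz)⟩

/-- Splitting: a walk avoiding `S \ {t}` either avoids `S`, or produces a vertex
`z ∉ S` with `Avoid G S x z` and `G.Adj z t`, provided `x ∉ S`. -/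
lemma avoid_split (t : V) : ∀ {x y : V} (w : G.Walk x y),
    (∀ z ∈ w.support, z ∉ S \ {t}) → x ∉ S →
    (y ∉ S ∧ Avoid G S x y) ∨ ∃ z, z ∉ S ∧ Avoid G S x z ∧ G.Adj z t := by
  intro x y w
  induction w with
  | @nil a => exact fun _ hx => Or.inl ⟨hx, avoid_refl hx⟩
  | @cons a b c hab p ih =>
    intro hw hx
    by_cases hbt : b = t
    · exact Or.inr ⟨a, hx, avoid_refl hx, hbt ▸ hab⟩
    · have hb : b ∉ S := by
        have := hw b (by simp)
        simp only [Set.mem_diff, Set.mem_singleton_iff, not_and, not_not] at this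
        intro hbS
        exact hbt (this hbS)
      have step : Avoid G S a b := avoid_of_adj hab hx hb
      rcases ih (fun z hz => hw z (by simp [hz])) hb with ⟨hc, hav⟩ | ⟨z, hz, hav, hadj⟩
      · exact Or.inl ⟨hc, step.trans hav⟩
      · exact Or.inr ⟨z, hz, step.trans hav, hadj⟩

/-- In a `3`-connected graph, every element of a (≤ 3)-element disconnecting set has a
neighbour in the component of any given surviving vertex. -/
lemma neighbor_in_component
    (hG : ∀ S : Set V, S.Finite → S.ncard < 3 → (G.induce Sᶜ).Connected)
    {D : Set V} (hDfin : D.Finite) {t : V} (hD2 : (D \ {t}).ncard < 3)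
    (hbad : ¬ (G.induce Dᶜ).Connected) (hne : ∃ p, p ∉ D)
    {x : V} (hx : x ∉ D) :
    ∃ z, z ∉ D ∧ G.Adj t z ∧ Avoid G D x z := by
  obtain ⟨a, b, ha, hb, hab⟩ := exists_not_avoid hbad hne
  have hy : ∃ y, y ∉ D ∧ ¬ Avoid G D x y := by
    by_cases hxa : Avoid G D x a
    · exact ⟨b, hb, fun h => hab (hxa.symm.trans h)⟩
    · exact ⟨a, ha, hxa⟩
  obtain ⟨y, hyD, hy⟩ := hy
  have hconn' : (G.induce (D \ {t})ᶜ).Connected := hG _ hDfin.diff hD2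
  have hav' : Avoid G (D \ {t}) x y :=
    avoid_of_connected hconn' (fun h => hx h.1) (fun h => hyD h.1)
  obtain ⟨w, hw⟩ := hav'
  rcases avoid_split t w hw hx with ⟨_, hav⟩ | ⟨z, hz, hav, hadj⟩
  · exact absurd hav hy
  · exact ⟨z, hz, hadj.symm, hav⟩

/-- Exit lemma: a walk starting inside `P` and ending outside produces an edge
leaving `P`, with both ends on the walk. -/
lemma exists_exit_edge (P : V → Prop) :
    ∀ {x y : V} (w : G.Walk x y), P x → ¬ P y →
    ∃ g g', G.Adj g g' ∧ P g ∧ ¬ P g' ∧ g ∈ w.support ∧ g' ∈ w.support := by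
  intro x y w
  induction w with
  | @nil a => exact fun hp hq => absurd hp hq
  | @cons a b c hab p ih =>
    intro hp hq
    by_cases hPb : P b
    · obtain ⟨g, g', h1, h2, h3, h4, h5⟩ := ih hPb hq
      exact ⟨g, g', h1, h2, h3, by simp [h4], by simp [h5]⟩
    · exact ⟨a, b, hab, hp, hPb, by simp, by simp⟩



lemma triple_finite (a b c : V) : ({a, b, c} : Set V).Finite :=
  (((Set.finite_singleton c).insert b).insert a)

lemma triple_ncard_le (a b c : V) : ({a, b, c} : Set V).ncard ≤ 3 := by
  refine le_trans (Set.ncard_insert_le _ _) ?_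
  have := Set.ncard_insert_le b ({c} : Set V)
  have h1 : ({c} : Set V).ncard = 1 := Set.ncard_singleton c
  omega

lemma triple_diff_ncard_lt {a b c t : V} (ht : t ∈ ({a, b, c} : Set V)) :
    (({a, b, c} : Set V) \ {t}).ncard < 3 := by
  have hfin := triple_finite a b c
  have h1 := Set.ncard_diff_singleton_of_mem ht
  have h2 := triple_ncard_le a b c
  have h3 : 0 < ({a, b, c} : Set V).ncard :=
    (Set.ncard_pos hfin).mpr ⟨a, by simp⟩
  omega

lemma pair_ncard_lt (a b : V) : ({a, b} : Set V).ncard < 3 := by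
  have := Set.ncard_insert_le a ({b} : Set V)
  have h1 : ({b} : Set V).ncard = 1 := Set.ncard_singleton b
  omega

lemma single_ncard_lt (a : V) : ({a} : Set V).ncard < 3 := by
  have : ({a} : Set V).ncard = 1 := Set.ncard_singleton a
  omega

/-- An infinite set mapped into a finite set has an infinite fiber. -/
lemma infinite_fiber {α β : Type*} {s : Set α} {t : Set β} {f : α → β}
    (hs : s.Infinite) (ht : t.Finite) (hf : ∀ x ∈ s, f x ∈ t) :
    ∃ b0 ∈ t, {x | x ∈ s ∧ f x = b0}.Infinite := by
  by_contra h
  push_neg at h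
  have : s ⊆ ⋃ b ∈ t, {x | x ∈ s ∧ f x = b} := by
    intro x hx
    exact Set.mem_biUnion (hf x hx) ⟨hx, rfl⟩
  exact absurd ((ht.biUnion (fun b hb => h b hb)).subset this)
    hs


variable (G)

/-- The component of `α` in `G - X`. -/
def Aside (X : Set V) (α : V) : Set V := {x | x ∉ X ∧ Avoid G X α x}

/-- The rest of `G - X`. -/
def Bside (X : Set V) (α : V) : Set V := {x | x ∉ X ∧ ¬ Avoid G X α x}

variable {G}

section Sides

variable {X : Set V} {α : V}

lemma Aside_mem {p : V} (hp : p ∈ Aside G X α) : p ∉ X ∧ Avoid G X α p := hp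

lemma Bside_mem {p : V} (hp : p ∈ Bside G X α) : p ∉ X ∧ ¬ Avoid G X α p := hp

lemma mem_Aside_of_notMem (hα : α ∉ X) : α ∈ Aside G X α := ⟨hα, avoid_refl hα⟩

lemma not_in_both {p : V} (hA : p ∈ Aside G X α) (hB : p ∈ Bside G X α) : False :=
  hB.2 hA.2

lemma side_cover {p : V} (hp : p ∉ X) : p ∈ Aside G X α ∨ p ∈ Bside G X α := by
  by_cases h : Avoid G X α p
  · exact Or.inl ⟨hp, h⟩
  · exact Or.inr ⟨hp, h⟩

lemma Aside_closure {p q : V} (hp : p ∈ Aside G X α) (hpq : G.Adj p q) (hq : q ∉ X) :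
    q ∈ Aside G X α :=
  ⟨hq, hp.2.trans (avoid_of_adj hpq hp.1 hq)⟩

lemma Bside_closure {p q : V} (hp : p ∈ Bside G X α) (hpq : G.Adj p q) (hq : q ∉ X) :
    q ∈ Bside G X α := by
  refine ⟨hq, fun hav => hp.2 (hav.trans (avoid_of_adj hpq.symm hq hp.1))⟩

lemma no_adj_between {p q : V} (hp : p ∈ Aside G X α) (hq : q ∈ Bside G X α) :
    ¬ G.Adj p q := fun h => not_in_both (Aside_closure hp h hq.1) hq

/-- A walk avoiding `X` that starts in `Aside` stays in `Aside`. -/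
lemma stay_in_Aside : ∀ {p q : V} (w : G.Walk p q),
    (∀ z ∈ w.support, z ∉ X) → p ∈ Aside G X α → q ∈ Aside G X α := by
  intro p q w
  induction w with
  | @nil a => exact fun _ hp => hp
  | @cons a b c hab p ih =>
    intro hw hp
    exact ih (fun z hz => hw z (by simp [hz])) (Aside_closure hp hab (hw b (by simp)))

/-- A walk from `Aside` to `Bside` must hit `X`. -/
lemma walk_hits_X {p q : V} (w : G.Walk p q) (hp : p ∈ Aside G X α)
    (hq : q ∈ Bside G X α) : ∃ s ∈ w.support, s ∈ X := by
  by_contra h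
  push_neg at h
  exact not_in_both (stay_in_Aside w h hp) hq

end Sides

section Main

variable [Infinite V]
variable {X : Set V} {α : V}
variable (hG3 : ∀ S : Set V, S.Finite → S.ncard < 3 → (G.induce Sᶜ).Connected)

include hG3

/-- Every component of `G - {α, b, y}` contains a vertex of `X`. -/
lemma comp_meets_X (hα : α ∉ X) {b y : V} (hb : b ∈ Bside G X α)
    (hyα : y ≠ α) (hyb : y ≠ b)
    (hbadT : ¬ (G.induce (({α, b, y} : Set V)ᶜ)).Connected)
    {x : V} (hx : x ∉ ({α, b, y} : Set V)) :
    ∃ s, s ∈ X ∧ s ∉ ({α, b, y} : Set V) ∧ Avoid G ({α, b, y} : Set V) x s := by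
  set T : Set V := {α, b, y} with hT
  have hTfin : T.Finite := triple_finite α b y
  have hne : ∃ p, p ∉ T := by
    obtain ⟨p, hp⟩ := hTfin.infinite_compl.nonempty
    exact ⟨p, hp⟩
  -- a neighbour of α in the component of x
  obtain ⟨z, hzT, hzadj, hzav⟩ := neighbor_in_component hG3 hTfin
    (triple_diff_ncard_lt (by simp [hT] : α ∈ T)) hbadT hne hx
  by_cases hzX : z ∈ X
  · exact ⟨z, hzX, hzT, hzav⟩
  have hzA : z ∈ Aside G X α := Aside_closure (mem_Aside_of_notMem hα) hzadj hzX
  -- a neighbour of b in the component of x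
  obtain ⟨z', hz'T, hz'adj, hz'av⟩ := neighbor_in_component hG3 hTfin
    (triple_diff_ncard_lt (by simp [hT] : b ∈ T)) hbadT hne hx
  by_cases hz'X : z' ∈ X
  · exact ⟨z', hz'X, hz'T, hz'av⟩
  have hz'B : z' ∈ Bside G X α := Bside_closure hb hz'adj hz'X
  -- a walk from z to z' avoiding T must hit X
  obtain ⟨wzz', hwzz'⟩ := hzav.symm.trans hz'av
  obtain ⟨s, hsupp, hsX⟩ := walk_hits_X wzz' hzA hz'B
  exact ⟨s, hsX, hwzz' s hsupp, hzav.trans (Avoid.to_support_mem hwzz' hsupp)⟩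

/-- Not all surviving vertices of `X` can be `T`-related to each other. -/
lemma not_all_X_related (hα : α ∉ X) {b y : V} (hb : b ∈ Bside G X α)
    (hyα : y ≠ α) (hyb : y ≠ b)
    (hbadT : ¬ (G.induce (({α, b, y} : Set V)ᶜ)).Connected) :
    ¬ (∀ s s', s ∈ X → s' ∈ X → s ∉ ({α, b, y} : Set V) → s' ∉ ({α, b, y} : Set V) →
        Avoid G ({α, b, y} : Set V) s s') := by
  intro hall
  apply hbadT
  have hne : ∃ p, p ∉ ({α, b, y} : Set V) :=
    (triple_finite α b y).infinite_compl.nonempty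
  refine connected_of_avoid hne (fun p q hp hq => ?_)
  obtain ⟨s, hsX, hsT, hsav⟩ := comp_meets_X hG3 hα hb hyα hyb hbadT hp
  obtain ⟨s', hs'X, hs'T, hs'av⟩ := comp_meets_X hG3 hα hb hyα hyb hbadT hq
  exact (hsav.trans (hall s s' hsX hs'X hsT hs'T)).trans hs'av.symm

end Main


section Main2

variable [Infinite V]
variable {X : Set V} {α u v w : V}
variable (hG3 : ∀ S : Set V, S.Finite → S.ncard < 3 → (G.induce Sᶜ).Connected)
variable (hXeq : X = {u, v, w}) (huv : u ≠ v) (huw : u ≠ w) (hvw : v ≠ w)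
variable (hα : α ∉ X)

include hG3 hXeq huv huw hvw hα

/-- Some surviving vertex of `X` is `T`-separated from both other vertices of `X`. -/
lemma exists_singleton_class {b y : V} (hb : b ∈ Bside G X α)
    (hyX : y ∉ X) (hyα : y ≠ α) (hyb : y ≠ b)
    (hbadT : ¬ (G.induce (({α, b, y} : Set V)ᶜ)).Connected) :
    ∃ s₁, s₁ ∈ X ∧ ∀ σ ∈ X, σ ≠ s₁ → ¬ Avoid G ({α, b, y} : Set V) s₁ σ := by
  set T : Set V := {α, b, y} with hT
  have hXT : ∀ s, s ∈ X → s ∉ T := by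
    intro s hs
    simp only [hT, Set.mem_insert_iff, Set.mem_singleton_iff]
    push_neg
    refine ⟨fun h => hα (h ▸ hs), fun h => hb.1 (h ▸ hs), fun h => hyX (h ▸ hs)⟩
  have huX : u ∈ X := by rw [hXeq]; simp
  have hvX : v ∈ X := by rw [hXeq]; simp
  have hwX : w ∈ X := by rw [hXeq]; simp
  have hmemX : ∀ σ, σ ∈ X → σ = u ∨ σ = v ∨ σ = w := by
    intro σ hσ; rw [hXeq] at hσ; simpa using hσ
  have hnot := not_all_X_related hG3 hα hb hyα hyb hbadT
  by_cases h1 : Avoid G T u v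
  · by_cases h2 : Avoid G T u w
    · exfalso
      apply hnot
      intro s s' hs hs' hsT hs'T
      have hrel : ∀ σ σ', (σ = u ∨ σ = v ∨ σ = w) → (σ' = u ∨ σ' = v ∨ σ' = w) →
          Avoid G T σ σ' := by
        have h3 : Avoid G T v w := h1.symm.trans h2
        rintro σ σ' (rfl | rfl | rfl) (rfl | rfl | rfl)
        · exact avoid_refl (hXT _ huX)
        · exact h1
        · exact h2
        · exact h1.symm
        · exact avoid_refl (hXT _ hvX)
        · exact h3
        · exact h2.symm
        · exact h3.symm
        · exact avoid_refl (hXT _ hwX)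
      exact hrel s s' (hmemX s hs) (hmemX s' hs')
    · -- u ~ v, u ≁ w ⇒ v ≁ w, singleton is w
      have h3 : ¬ Avoid G T v w := fun h3 => h2 (h1.trans h3)
      refine ⟨w, hwX, fun σ hσ hσw => ?_⟩
      rcases hmemX σ hσ with rfl | rfl | rfl
      · exact fun h => h2 h.symm
      · exact fun h => h3 h.symm
      · exact absurd rfl hσw
  · by_cases h2 : Avoid G T u w
    · -- u ≁ v, u ~ w ⇒ w ≁ v, singleton is v
      have h3 : ¬ Avoid G T v w := fun h3 => h1 (h2.trans h3.symm)
      refine ⟨v, hvX, fun σ hσ hσv => ?_⟩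
      rcases hmemX σ hσ with rfl | rfl | rfl
      · exact fun h => h1 h.symm
      · exact absurd rfl hσv
      · exact h3
    · -- u ≁ v, u ≁ w, singleton is u
      refine ⟨u, huX, fun σ hσ hσu => ?_⟩
      rcases hmemX σ hσ with rfl | rfl | rfl
      · exact absurd rfl hσu
      · exact h1
      · exact h2

/-- If the witness is on the `α`-side, no `Bside` vertex is `T`-related to `s₁`. -/
lemma Bside_not_reach {b y s₁ s₂ : V} (hb : b ∈ Bside G X α)
    (hyA : y ∈ Aside G X α) (hyα : y ≠ α) (hyb : y ≠ b)
    (hs₁X : s₁ ∈ X) (hs₁ : ∀ σ ∈ X, σ ≠ s₁ → ¬ Avoid G ({α, b, y} : Set V) s₁ σ)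
    (hs₂X : s₂ ∈ X) (hs₂ : s₂ ≠ s₁) :
    ∀ p ∈ Bside G X α, ¬ Avoid G ({α, b, y} : Set V) p s₁ := by
  set T : Set V := {α, b, y} with hT
  intro p hp hav
  have hpT : p ∉ T := hav.left_notMem
  have hpb : p ≠ b := fun h => hpT (by simp [hT, h])
  -- walk from p to s₂ avoiding {b, s₁}
  have hconn : (G.induce ({b, s₁} : Set V)ᶜ).Connected :=
    hG3 _ (Set.toFinite _) (pair_ncard_lt b s₁)
  have hpbs : p ∉ ({b, s₁} : Set V) := by
    simp only [Set.mem_insert_iff, Set.mem_singleton_iff]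
    push_neg
    exact ⟨hpb, fun h => hp.1 (h ▸ hs₁X)⟩
  have hs₂bs : s₂ ∉ ({b, s₁} : Set V) := by
    simp only [Set.mem_insert_iff, Set.mem_singleton_iff]
    push_neg
    exact ⟨fun h => hb.1 (h ▸ hs₂X), hs₂⟩
  obtain ⟨ω, hω⟩ := avoid_of_connected hconn hpbs hs₂bs
  -- exit the set of B-side vertices T-related to s₁
  have hstart : p ∈ Bside G X α ∧ Avoid G T p s₁ := ⟨hp, hav⟩
  have hend : ¬ (s₂ ∈ Bside G X α ∧ Avoid G T s₂ s₁) := by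
    rintro ⟨h, -⟩
    exact h.1 hs₂X
  obtain ⟨g, g', hadj, hPg, hPg', hgsupp, hg'supp⟩ :=
    exists_exit_edge (fun g => g ∈ Bside G X α ∧ Avoid G T g s₁) ω hstart hend
  have hgT : g ∉ T := hPg.2.left_notMem
  have hg'b : g' ≠ b := fun h => (hω g' hg'supp) (by simp [h])
  have hg's₁ : g' ≠ s₁ := fun h => (hω g' hg'supp) (by simp [h])
  by_cases hg'X : g' ∈ X
  · -- g' is a surviving X-vertex other than s₁, contradicting the separation
    have hg'T : g' ∉ T := by
      simp only [hT, Set.mem_insert_iff, Set.mem_singleton_iff]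
      push_neg
      exact ⟨fun h => hα (h ▸ hg'X), fun h => hb.1 (h ▸ hg'X), fun h => hyA.1 (h ▸ hg'X)⟩
    have : Avoid G T s₁ g' := (hPg.2.symm.trans (avoid_of_adj hadj hgT hg'T)).symm.symm
    exact hs₁ g' hg'X hg's₁ this
  · -- g' stays on the B side, contradicting that the pair exits
    have hg'B : g' ∈ Bside G X α := Bside_closure hPg.1 hadj hg'X
    have hg'T : g' ∉ T := by
      simp only [hT, Set.mem_insert_iff, Set.mem_singleton_iff]
      push_neg
      refine ⟨fun h => not_in_both (mem_Aside_of_notMem hα) (h ▸ hg'B), hg'b,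
        fun h => not_in_both hyA (h ▸ hg'B)⟩
    exact hPg' ⟨hg'B, (avoid_of_adj hadj.symm hg'T hgT).trans hPg.2⟩

end Main2


section Main3

variable [Infinite V]
variable {X : Set V} {α u v w : V}
variable (hG3 : ∀ S : Set V, S.Finite → S.ncard < 3 → (G.induce Sᶜ).Connected)
variable (hα : α ∉ X)

include hG3 hα

/-- Round 1: for a fixed `s ∈ X`, only finitely many `b` can have witness `s`. -/
lemma round1 {s s' s'' : V} (hXeq : X = {s, s', s''})
    (hss' : s ≠ s') (hss'' : s ≠ s'') (hs's'' : s' ≠ s'')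
    (Y : V → V)
    (hY : ∀ b ∈ Bside G X α, ¬ (G.induce (({α, b, Y b} : Set V)ᶜ)).Connected) :
    {b | b ∈ Bside G X α ∧ Y b = s}.Finite := by
  have hsX : s ∈ X := by rw [hXeq]; simp
  have hs'X : s' ∈ X := by rw [hXeq]; simp
  have hs''X : s'' ∈ X := by rw [hXeq]; simp
  -- a fixed walk from s' to s'' avoiding {α, s}
  have hconn : (G.induce ({α, s} : Set V)ᶜ).Connected :=
    hG3 _ (Set.toFinite _) (pair_ncard_lt α s)
  have hs'm : s' ∉ ({α, s} : Set V) := by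
    simp only [Set.mem_insert_iff, Set.mem_singleton_iff]
    push_neg
    exact ⟨fun h => hα (h ▸ hs'X), fun h => hss' h.symm⟩
  have hs''m : s'' ∉ ({α, s} : Set V) := by
    simp only [Set.mem_insert_iff, Set.mem_singleton_iff]
    push_neg
    exact ⟨fun h => hα (h ▸ hs''X), fun h => hss'' h.symm⟩
  obtain ⟨π, hπ⟩ := avoid_of_connected hconn hs'm hs''m
  refine Set.Finite.subset (π.support.finite_toSet) ?_
  rintro b ⟨hb, hYb⟩
  by_contra hbπ
  -- then π avoids {α, b, s}, contradicting that it separates s' from s''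
  set T : Set V := {α, b, s} with hT
  have hbadT : ¬ (G.induce (Tᶜ)).Connected := by
    have := hY b hb
    rwa [hYb] at this
  have hsα : s ≠ α := fun h => hα (h ▸ hsX)
  have hsb : s ≠ b := fun h => hb.1 (h ▸ hsX)
  have havT : Avoid G T s' s'' := by
    refine ⟨π, fun z hz => ?_⟩
    have hz1 := hπ z hz
    simp only [Set.mem_insert_iff, Set.mem_singleton_iff] at hz1
    push_neg at hz1
    simp only [hT, Set.mem_insert_iff, Set.mem_singleton_iff]
    push_neg
    exact ⟨hz1.1, fun h => hbπ (h ▸ hz), hz1.2⟩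
  apply not_all_X_related hG3 hα hb hsα hsb hbadT
  intro σ σ' hσ hσ' hσT hσ'T
  have hσm : σ = s' ∨ σ = s'' := by
    rw [hXeq] at hσ
    simp only [Set.mem_insert_iff, Set.mem_singleton_iff] at hσ
    rcases hσ with rfl | rfl | rfl
    · exact absurd (by simp [hT]) hσT
    · exact Or.inl rfl
    · exact Or.inr rfl
  have hσ'm : σ' = s' ∨ σ' = s'' := by
    rw [hXeq] at hσ'
    simp only [Set.mem_insert_iff, Set.mem_singleton_iff] at hσ'
    rcases hσ' with rfl | rfl | rfl
    · exact absurd (by simp [hT]) hσ'T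
    · exact Or.inl rfl
    · exact Or.inr rfl
  rcases hσm with rfl | rfl <;> rcases hσ'm with rfl | rfl
  · exact avoid_refl hσT
  · exact havT
  · exact havT.symm
  · exact avoid_refl hσT

/-- Round 2: only finitely many `b` can have a witness on the `α`-side. -/
lemma round2 (hXeq : X = {u, v, w}) (huv : u ≠ v) (huw : u ≠ w) (hvw : v ≠ w)
    (Y : V → V)
    (hY : ∀ b ∈ Bside G X α, ¬ (G.induce (({α, b, Y b} : Set V)ᶜ)).Connected ∧
      Y b ≠ α ∧ Y b ≠ b) :
    {b | b ∈ Bside G X α ∧ Y b ∈ Aside G X α}.Finite := by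
  have key : ∀ b, b ∈ Bside G X α → Y b ∈ Aside G X α →
      ∃ s₁ ∈ X, G.Adj s₁ b ∧ ∀ q ∈ Bside G X α, G.Adj s₁ q → q = b := by
    intro b hb hYA
    obtain ⟨hbadT, hYα, hYb⟩ := hY b hb
    set y : V := Y b with hy
    set T : Set V := {α, b, y} with hT
    obtain ⟨s₁, hs₁X, hs₁⟩ :=
      exists_singleton_class hG3 hXeq huv huw hvw hα hb hYA.1 hYα hYb hbadT
    -- pick another element of X
    have hs₂ : ∃ s₂ ∈ X, s₂ ≠ s₁ := by
      by_cases h : s₁ = u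
      · exact ⟨v, by rw [hXeq]; simp, fun hh => huv.symm (hh.trans h)⟩
      · exact ⟨u, by rw [hXeq]; simp, h ∘ Eq.symm⟩
    obtain ⟨s₂, hs₂X, hs₂s₁⟩ := hs₂
    have hBempty := Bside_not_reach hG3 hXeq huv huw hvw hα hb hYA hYα hYb
      hs₁X hs₁ hs₂X hs₂s₁
    have hs₁T : s₁ ∉ T := by
      simp only [hT, Set.mem_insert_iff, Set.mem_singleton_iff]
      push_neg
      exact ⟨fun h => hα (h ▸ hs₁X), fun h => hb.1 (h ▸ hs₁X), fun h => hYA.1 (h ▸ hs₁X)⟩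
    -- b has a neighbour in the component of s₁, which must be s₁ itself
    have hTfin : T.Finite := triple_finite α b y
    have hne : ∃ p, p ∉ T := hTfin.infinite_compl.nonempty
    obtain ⟨z, hzT, hzadj, hzav⟩ := neighbor_in_component hG3 hTfin
      (triple_diff_ncard_lt (by simp [hT] : b ∈ T)) hbadT hne hs₁T
    have hzs₁ : z = s₁ := by
      by_contra hzs
      by_cases hzX : z ∈ X
      · exact hs₁ z hzX hzs hzav
      · exact hBempty z (Bside_closure hb hzadj hzX) hzav.symm
    refine ⟨s₁, hs₁X, by rw [← hzs₁]; exact hzadj.symm, fun q hq hadjq => ?_⟩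
    by_contra hqb
    have hqT : q ∉ T := by
      simp only [hT, Set.mem_insert_iff, Set.mem_singleton_iff]
      push_neg
      exact ⟨fun h => not_in_both (mem_Aside_of_notMem hα) (h ▸ hq), hqb,
        fun h => not_in_both hYA (h ▸ hq)⟩
    exact hBempty q hq (avoid_of_adj hadjq.symm hqT hs₁T)
  -- each s ∈ X can serve at most one b
  have hsub : {b | b ∈ Bside G X α ∧ Y b ∈ Aside G X α} ⊆
      ⋃ s ∈ X, {b | b ∈ Bside G X α ∧ G.Adj s b ∧ ∀ q ∈ Bside G X α, G.Adj s q → q = b} := by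
    rintro b ⟨hb, hYA⟩
    obtain ⟨s₁, hs₁X, h1, h2⟩ := key b hb hYA
    exact Set.mem_biUnion hs₁X ⟨hb, h1, h2⟩
  have hXfin : X.Finite := by rw [hXeq]; exact triple_finite u v w
  refine Set.Finite.subset (hXfin.biUnion (fun s _ => ?_)) hsub
  apply Set.Subsingleton.finite
  rintro b₁ ⟨hb₁, hadj₁, huniq₁⟩ b₂ ⟨hb₂, hadj₂, huniq₂⟩
  rw [huniq₂ b₁ hb₁ hadj₁]

end Main3


/-- The core combinatorial theorem: an infinite `3`-connected non-complete graph has a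
non-edge `{u,v}` such that `G - {u,v,t}` is connected for every `t`. -/
theorem core [Infinite V] (G : SimpleGraph V)
    (hG3 : ∀ S : Set V, S.Finite → S.ncard < 3 → (G.induce Sᶜ).Connected)
    (hnc : ∃ u v : V, u ≠ v ∧ ¬ G.Adj u v) :
    ∃ u v : V, u ≠ v ∧ ¬ G.Adj u v ∧
      ∀ t : V, (G.induce (({u, v, t} : Set V)ᶜ)).Connected := by
  classical
  by_contra hcon
  push_neg at hcon
  obtain ⟨u, v, huv, hnadj⟩ := hnc
  obtain ⟨w, hw⟩ := hcon u v huv hnadj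
  have hpair : ∀ a b : V, (G.induce (({a, b} : Set V)ᶜ)).Connected :=
    fun a b => hG3 _ (Set.toFinite _) (pair_ncard_lt a b)
  have hwu : w ≠ u := by
    intro h'
    apply hw
    have h : ({u, v, w} : Set V) = {u, v} := by rw [h']; ext x; simp; tauto
    rw [h]
    exact hpair u v
  have hwv : w ≠ v := by
    intro h'
    apply hw
    have h : ({u, v, w} : Set V) = {u, v} := by rw [h']; ext x; simp; try tauto
    rw [h]
    exact hpair u v
  set X : Set V := {u, v, w} with hX
  have hXfin : X.Finite := triple_finite u v w
  have hbadX : ¬ (G.induce Xᶜ).Connected := hw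
  have hne : ∃ p, p ∉ X := hXfin.infinite_compl.nonempty
  obtain ⟨x₀, y₀, hx₀, hy₀, hnav⟩ := exists_not_avoid hbadX hne
  -- choose a base vertex α with infinite B-side
  have hαinf : ∃ α, α ∉ X ∧ (Bside G X α).Infinite := by
    by_cases h : (Bside G X x₀).Infinite
    · exact ⟨x₀, hx₀, h⟩
    · refine ⟨y₀, hy₀, ?_⟩
      have hsub : Aside G X x₀ ⊆ Bside G X y₀ := by
        rintro z ⟨hz, hav⟩
        exact ⟨hz, fun hav' => hnav (hav.trans hav'.symm)⟩
      refine Set.Infinite.mono hsub ?_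
      by_contra hA
      rw [Set.not_infinite] at hA h
      have hcov : Xᶜ ⊆ Aside G X x₀ ∪ Bside G X x₀ := by
        intro z hz
        exact side_cover hz
      exact absurd ((hA.union h).subset hcov) hXfin.infinite_compl
  obtain ⟨α, hαX, hBinf⟩ := hαinf
  -- choose witnesses for the pairs (α, b)
  have hex : ∀ b : V, ∃ y : V, b ∈ Bside G X α →
      (¬ (G.induce (({α, b, y} : Set V)ᶜ)).Connected ∧ y ≠ α ∧ y ≠ b) := by
    intro b
    by_cases hb : b ∈ Bside G X α
    · have hαb : α ≠ b := fun h => hb.2 (h ▸ avoid_refl hαX)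
      have hnadj2 : ¬ G.Adj α b := no_adj_between (mem_Aside_of_notMem hαX) hb
      obtain ⟨t, ht⟩ := hcon α b hαb hnadj2
      refine ⟨t, fun _ => ⟨ht, ?_, ?_⟩⟩
      · rintro rfl
        apply ht
        have h : ({t, b, t} : Set V) = {t, b} := by ext x; simp; tauto
        rw [h]
        exact hpair t b
      · rintro rfl
        apply ht
        have h : ({α, t, t} : Set V) = {α, t} := by ext x; simp; try tauto
        rw [h]
        exact hpair α t
    · exact ⟨α, fun h => absurd h hb⟩
  choose Y hY using hex
  -- partition of the B-side according to where the witness lives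
  have hB1fin : {b | b ∈ Bside G X α ∧ Y b ∈ X}.Finite := by
    have hXu : X = {u, v, w} := hX
    have hXv : X = {v, u, w} := by rw [hX]; ext x; simp; tauto
    have hXw : X = {w, u, v} := by rw [hX]; ext x; simp; tauto
    have hu := round1 hG3 hαX hXu huv (hwu.symm) (hwv.symm) Y
      (fun b hb => (hY b hb).1)
    have hv := round1 hG3 hαX hXv huv.symm (hwv.symm) (hwu.symm) Y
      (fun b hb => (hY b hb).1)
    have hww := round1 hG3 hαX hXw hwu hwv huv Y
      (fun b hb => (hY b hb).1)
    refine Set.Finite.subset ((hu.union hv).union hww) ?_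
    rintro b ⟨hb, hYX⟩
    rw [hX] at hYX
    simp only [Set.mem_insert_iff, Set.mem_singleton_iff] at hYX
    rcases hYX with h | h | h
    · exact Or.inl (Or.inl ⟨hb, h⟩)
    · exact Or.inl (Or.inr ⟨hb, h⟩)
    · exact Or.inr ⟨hb, h⟩
  have hB2fin : {b | b ∈ Bside G X α ∧ Y b ∈ Aside G X α}.Finite :=
    round2 hG3 hαX hX huv (hwu.symm) (hwv.symm) Y (fun b hb => hY b hb)
  have hB3inf : {b | b ∈ Bside G X α ∧ Y b ∈ Bside G X α}.Infinite := by
    by_contra h3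
    rw [Set.not_infinite] at h3
    have hcov : Bside G X α ⊆ {b | b ∈ Bside G X α ∧ Y b ∈ X} ∪
        {b | b ∈ Bside G X α ∧ Y b ∈ Aside G X α} ∪
        {b | b ∈ Bside G X α ∧ Y b ∈ Bside G X α} := by
      intro b hb
      by_cases hYX : Y b ∈ X
      · exact Or.inl (Or.inl ⟨hb, hYX⟩)
      · rcases side_cover hYX with hA | hB
        · exact Or.inl (Or.inr ⟨hb, hA⟩)
        · exact Or.inr ⟨hb, hB⟩
    exact hBinf (Set.Finite.subset ((hB1fin.union hB2fin).union h3) hcov)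
  -- choose the isolated X-vertex for each b in the third class
  have hsig : ∀ b : V, ∃ s : V, (b ∈ Bside G X α ∧ Y b ∈ Bside G X α) →
      (s ∈ X ∧ ∀ σ ∈ X, σ ≠ s → ¬ Avoid G ({α, b, Y b} : Set V) s σ) := by
    intro b
    by_cases hb : b ∈ Bside G X α ∧ Y b ∈ Bside G X α
    · obtain ⟨hbB, hYB⟩ := hb
      obtain ⟨hbad, hYα, hYb⟩ := hY b hbB
      obtain ⟨s₁, h1, h2⟩ := exists_singleton_class hG3 hX huv (hwu.symm) (hwv.symm)
        hαX hbB hYB.1 hYα hYb hbad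
      exact ⟨s₁, fun _ => ⟨h1, h2⟩⟩
    · exact ⟨u, fun h => absurd h hb⟩
  choose σf hσ using hsig
  obtain ⟨s0, hs0X, hfib⟩ := infinite_fiber hB3inf hXfin (fun b hb => (hσ b hb).1)
  obtain ⟨s₂, hs₂X, hs₂s0⟩ : ∃ s₂, s₂ ∈ X ∧ s₂ ≠ s0 := by
    by_cases h : s0 = u
    · exact ⟨v, by rw [hX]; simp, fun hh => huv.symm (hh.trans h)⟩
    · exact ⟨u, by rw [hX]; simp, fun hh => h hh.symm⟩
  have hs0α : s0 ≠ α := fun h => hαX (h ▸ hs0X)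
  have hs₂α : s₂ ≠ α := fun h => hαX (h ▸ hs₂X)
  have hnoavoid : ∀ b, (b ∈ Bside G X α ∧ Y b ∈ Bside G X α) → σf b = s0 →
      ¬ Avoid G ({α, b, Y b} : Set V) s0 s₂ := by
    intro b hb hsf
    have h2 := (hσ b hb).2 s₂ hs₂X (fun hh => hs₂s0 (hh.trans hsf))
    rwa [hsf] at h2
  -- the fixed walk π from s0 to s₂ avoiding α
  have hconn1 : (G.induce (({α} : Set V)ᶜ)).Connected :=
    hG3 _ (Set.finite_singleton α) (single_ncard_lt α)
  obtain ⟨π, hπ⟩ := avoid_of_connected hconn1 (by simpa using hs0α) (by simpa using hs₂α)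
  have hhit : ∀ b ∈ {x | x ∈ {b | b ∈ Bside G X α ∧ Y b ∈ Bside G X α} ∧ σf x = s0},
      b ∈ π.support ∨ Y b ∈ π.support := by
    intro b hb
    by_contra hcont
    push_neg at hcont
    apply hnoavoid b hb.1 hb.2
    refine ⟨π, fun z hz => ?_⟩
    have hzα : z ≠ α := by simpa using hπ z hz
    simp only [Set.mem_insert_iff, Set.mem_singleton_iff]
    push_neg
    exact ⟨hzα, fun h => hcont.1 (h ▸ hz), fun h => hcont.2 (h ▸ hz)⟩
  have hF2inf : {x | x ∈ {x | x ∈ {b | b ∈ Bside G X α ∧ Y b ∈ Bside G X α} ∧ σf x = s0} ∧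
      Y x ∈ {z | z ∈ π.support}}.Infinite := by
    by_contra h2
    rw [Set.not_infinite] at h2
    have hss : {x | x ∈ {b | b ∈ Bside G X α ∧ Y b ∈ Bside G X α} ∧ σf x = s0} ⊆
        {z | z ∈ π.support} ∪
          {x | x ∈ {x | x ∈ {b | b ∈ Bside G X α ∧ Y b ∈ Bside G X α} ∧ σf x = s0} ∧
            Y x ∈ {z | z ∈ π.support}} := fun b hb => by
      rcases hhit b hb with h | h
      · exact Or.inl h
      · exact Or.inr ⟨hb, h⟩
    exact hfib (Set.Finite.subset (π.support.finite_toSet.union h2) hss)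
  obtain ⟨y₀, hy₀supp, hfib2⟩ := infinite_fiber hF2inf π.support.finite_toSet
    (fun b hb => hb.2)
  obtain ⟨b₅, hb₅⟩ := hfib2.nonempty
  have hy₀B : y₀ ∈ Bside G X α := by
    have h := hb₅.1.1.1.2
    rwa [hb₅.2] at h
  have hs0y₀ : s0 ≠ y₀ := fun h => hy₀B.1 (h ▸ hs0X)
  have hs₂y₀ : s₂ ≠ y₀ := fun h => hy₀B.1 (h ▸ hs₂X)
  have hconn2 : (G.induce (({α, y₀} : Set V)ᶜ)).Connected :=
    hG3 _ (Set.toFinite _) (pair_ncard_lt α y₀)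
  obtain ⟨ρ, hρ⟩ := avoid_of_connected hconn2
    (by simp only [Set.mem_insert_iff, Set.mem_singleton_iff]; push_neg; exact ⟨hs0α, hs0y₀⟩)
    (by simp only [Set.mem_insert_iff, Set.mem_singleton_iff]; push_neg; exact ⟨hs₂α, hs₂y₀⟩)
  have hfinal : {x | x ∈ {x | x ∈ {x | x ∈ {b | b ∈ Bside G X α ∧ Y b ∈ Bside G X α} ∧
      σf x = s0} ∧ Y x ∈ {z | z ∈ π.support}} ∧ Y x = y₀} ⊆ {z | z ∈ ρ.support} := by
    intro b hb
    by_contra hbρ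
    apply hnoavoid b hb.1.1.1 hb.1.1.2
    refine ⟨ρ, fun z hz => ?_⟩
    have hzm : z ≠ α ∧ z ≠ y₀ := by
      have := hρ z hz
      simp only [Set.mem_insert_iff, Set.mem_singleton_iff] at this
      push_neg at this
      exact this
    simp only [Set.mem_insert_iff, Set.mem_singleton_iff]
    push_neg
    refine ⟨hzm.1, fun h => hbρ (h ▸ hz), fun h => hzm.2 (by rw [← hb.2, h])⟩
  exact hfib2 (Set.Finite.subset ρ.support.finite_toSet hfinal)

end CNEAux

lemma contract_adj {G : SimpleGraph V} {u v : V} {a b : {w : V // w ≠ v}}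
    (hab : a.1 ≠ b.1) (h : G.Adj a.1 b.1 ∨ (a.1 = u ∧ G.Adj v b.1) ∨ (b.1 = u ∧ G.Adj a.1 v)) :
    (contractNonEdge G u v).Adj a b :=
  show a ≠ b ∧ _ from ⟨fun he => hab (congrArg Subtype.val he), h⟩

/-- Transfer of connectivity in the case where the contracted vertex is not removed. -/
lemma transfer_A (G : SimpleGraph V) {u v : V} (huv : u ≠ v) (hadj : ¬ G.Adj u v)
    (S : Set {w : V // w ≠ v}) (hu : (⟨u, huv⟩ : {w : V // w ≠ v}) ∉ S)
    (hc : (G.induce (Subtype.val '' S)ᶜ).Connected) :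
    ((contractNonEdge G u v).induce Sᶜ).Connected := by
  classical
  set S₀ : Set V := Subtype.val '' S with hS₀
  have husub : (⟨u, huv⟩ : {w : V // w ≠ v}) ∈ Sᶜ := hu
  have hmem : ∀ (z : V), z ∈ S₀ᶜ → (hzv : z ≠ v) →
      ((⟨z, hzv⟩ : {w : V // w ≠ v}) ∈ Sᶜ) := by
    intro z hz hzv hmem'
    exact hz ⟨⟨z, hzv⟩, hmem', rfl⟩
  let f : ↥S₀ᶜ → ↥Sᶜ := fun z =>
    if hz : (z : V) = v then ⟨⟨u, huv⟩, husub⟩ else ⟨⟨(z : V), hz⟩, hmem _ z.2 hz⟩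
  have hf_ne : ∀ (z : ↥S₀ᶜ) (hz : (z : V) ≠ v), f z = ⟨⟨(z : V), hz⟩, hmem _ z.2 hz⟩ := by
    intro z hz
    simp only [f, dif_neg hz]
  have hf_v : ∀ (z : ↥S₀ᶜ), (z : V) = v → f z = ⟨⟨u, huv⟩, husub⟩ := by
    intro z hz
    simp only [f, dif_pos hz]
  let F : (G.induce S₀ᶜ) →g ((contractNonEdge G u v).induce Sᶜ) :=
  { toFun := f
    map_rel' := by
      rintro ⟨p, hp⟩ ⟨q, hq⟩ hpq
      have hGpq : G.Adj p q := hpq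
      show (contractNonEdge G u v).Adj (f ⟨p, hp⟩).1 (f ⟨q, hq⟩).1
      by_cases hpv : p = v
      · by_cases hqv : q = v
        · rw [hpv, hqv] at hGpq
          exact absurd hGpq (G.loopless.irrefl v)
        · rw [hf_v ⟨p, hp⟩ hpv, hf_ne ⟨q, hq⟩ hqv]
          refine contract_adj ?_ (Or.inr (Or.inl ⟨rfl, by show G.Adj v q; rw [← hpv]; exact hGpq⟩))
          intro h
          replace h : u = q := h
          rw [hpv] at hGpq
          rw [h] at hadj
          exact hadj hGpq.symm
      · by_cases hqv : q = v
        · rw [hf_ne ⟨p, hp⟩ hpv, hf_v ⟨q, hq⟩ hqv]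
          refine contract_adj ?_ (Or.inr (Or.inr ⟨rfl, by show G.Adj p v; rw [← hqv]; exact hGpq⟩))
          intro h
          replace h : p = u := h
          rw [hqv] at hGpq
          rw [← h] at hadj
          exact hadj hGpq
        · rw [hf_ne ⟨p, hp⟩ hpv, hf_ne ⟨q, hq⟩ hqv]
          exact contract_adj hGpq.ne (Or.inl hGpq) }
  have hFlift : ∀ x : ↥Sᶜ, ∃ z : ↥S₀ᶜ, F z = x := by
    rintro ⟨⟨x, hxv⟩, hxS⟩
    have hx0 : x ∈ S₀ᶜ := by
      rintro ⟨⟨y, hyv⟩, hyS, rfl⟩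
      exact hxS hyS
    exact ⟨⟨x, hx0⟩, hf_ne ⟨x, hx0⟩ hxv⟩
  obtain ⟨z0⟩ := hc.nonempty
  haveI : Nonempty ↥Sᶜ := ⟨F z0⟩
  refine ⟨fun x y => ?_⟩
  obtain ⟨zx, hzx⟩ := hFlift x
  obtain ⟨zy, hzy⟩ := hFlift y
  rw [← hzx, ← hzy]
  exact (hc.preconnected zx zy).map F

/-- Transfer of connectivity in the case where the contracted vertex is removed. -/
lemma transfer_B (G : SimpleGraph V) {u v : V} (huv : u ≠ v)
    (S : Set {w : V // w ≠ v})
    (hc : (G.induce (insert v (Subtype.val '' S))ᶜ).Connected) :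
    ((contractNonEdge G u v).induce Sᶜ).Connected := by
  classical
  set W : Set V := insert v (Subtype.val '' S) with hW
  let F : (G.induce Wᶜ) →g ((contractNonEdge G u v).induce Sᶜ) :=
  { toFun := fun z => ⟨⟨(z : V), fun h => z.2 (h ▸ Set.mem_insert v _)⟩, by
      intro hmem
      exact z.2 (Set.mem_insert_of_mem _ ⟨_, hmem, rfl⟩)⟩
    map_rel' := by
      rintro ⟨p, hp⟩ ⟨q, hq⟩ hpq
      have hGpq : G.Adj p q := hpq
      exact contract_adj hGpq.ne (Or.inl hGpq) }
  have hFlift : ∀ x : ↥Sᶜ, ∃ z : ↥Wᶜ, F z = x := by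
    rintro ⟨⟨x, hxv⟩, hxS⟩
    refine ⟨⟨x, ?_⟩, rfl⟩
    rintro (h | ⟨⟨y, hyv⟩, hyS, rfl⟩)
    · exact hxv h
    · exact hxS hyS
  obtain ⟨z0⟩ := hc.nonempty
  haveI : Nonempty ↥Sᶜ := ⟨F z0⟩
  refine ⟨fun x y => ?_⟩
  obtain ⟨zx, hzx⟩ := hFlift x
  obtain ⟨zy, hzy⟩ := hFlift y
  rw [← hzx, ← hzy]
  exact (hc.preconnected zx zy).map F

/-- The reduction: a non-edge `{u,v}` such that `G - {u,v,t}` is connected for all `t`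
is contractible. -/
lemma reduction {G : SimpleGraph V} [Infinite V] (hG : KConnectedGen 3 G)
    {u v : V} (huv : u ≠ v) (hadj : ¬ G.Adj u v)
    (hcore : ∀ t : V, (G.induce ({u, v, t} : Set V)ᶜ).Connected) :
    KConnectedGen 3 (contractNonEdge G u v) := by
  classical
  constructor
  · have : Infinite {w : V // w ≠ v} := by
      have h1 : ({v} : Set V)ᶜ.Infinite := (Set.finite_singleton v).infinite_compl
      have h2 := h1.to_subtype
      exact Infinite.of_injective (fun (x : ↥({v} : Set V)ᶜ) => (⟨x.1, x.2⟩ : {w : V // w ≠ v}))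
        (by rintro ⟨a, ha⟩ ⟨b, hb⟩ h; simpa [Subtype.ext_iff] using h)
    exact Infinite.exists_subset_card_eq _ 4
  · intro S hSfin hScard
    by_cases hu : (⟨u, huv⟩ : {w : V // w ≠ v}) ∈ S
    · -- the contracted vertex is removed
      apply transfer_B G huv S
      have hS' : (S \ {⟨u, huv⟩}).ncard ≤ 1 := by
        have := Set.ncard_diff_singleton_of_mem hu
        omega
      rcases (Set.ncard_le_one_iff_eq hSfin.diff).mp hS' with h | ⟨t, ht⟩
      · have hSeq : S = {⟨u, huv⟩} := by
          apply Set.eq_singleton_iff_unique_mem.mpr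
          refine ⟨hu, fun x hx => ?_⟩
          by_contra hne
          exact absurd (Set.mem_diff_singleton.mpr ⟨hx, hne⟩)
            (by rw [h]; exact Set.notMem_empty x)
        have heq : insert v (Subtype.val '' S) = ({u, v, u} : Set V) := by
          rw [hSeq]
          ext x
          simp only [Set.image_singleton, Set.mem_insert_iff, Set.mem_singleton_iff]
          tauto
        rw [heq]
        exact hcore u
      · have hSeq : S = {⟨u, huv⟩, t} := by
          have h1 : S = insert (⟨u, huv⟩ : {w : V // w ≠ v}) (S \ {⟨u, huv⟩}) := by
            rw [Set.insert_diff_singleton, Set.insert_eq_of_mem hu]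
          rw [h1, ht]
        have heq : insert v (Subtype.val '' S) = ({u, v, t.1} : Set V) := by
          rw [hSeq]
          ext x
          simp only [Set.image_insert_eq, Set.image_singleton, Set.mem_insert_iff,
            Set.mem_singleton_iff]
          tauto
        rw [heq]
        exact hcore t.1
    · -- the contracted vertex survives
      apply transfer_A G huv hadj S hu
      exact hG.2 _ (hSfin.image _) (lt_of_le_of_lt (Set.ncard_image_le hSfin) hScard)

/-- Every non-complete 3-connected graph with infinitely many vertices contains a
contractible non-edge. -/
theorem stmt8 {V : Type*} [Infinite V] (G : SimpleGraph V)
    (hG : KConnectedGen 3 G) (hnc : ∃ u v : V, u ≠ v ∧ ¬ G.Adj u v) :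
    ∃ u v : V, u ≠ v ∧ ¬ G.Adj u v ∧ KConnectedGen 3 (contractNonEdge G u v) := by
  obtain ⟨u, v, huv, hadj, hcore⟩ := CNEAux.core G hG.2 hnc
  exact ⟨u, v, huv, hadj, reduction hG huv hadj hcore⟩
end

section
/- Let G be a finite 3-connected simple graph and let S be a 3-cut of G such that the three vertices of S are pairwise adjacent in G. If u and v lie in different components of G − S, then {u, v} is a contractible non-edge of G. -/
open SimpleGraph

variable {V : Type*}

/-- A graph is `k`-connected: it has at least `k+1` vertices, and removing any set of
fewer than `k` vertices leaves a connected graph. -/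
def KConnected (k : ℕ) (G : SimpleGraph V) : Prop :=
  k + 1 ≤ Nat.card V ∧ ∀ S : Set V, S.ncard < k → (G.induce Sᶜ).Connected

/-- `{u, v}` is a contractible non-edge of `G`: a non-edge whose contraction yields
a `3`-connected graph. -/
def IsContractibleNonEdge (G : SimpleGraph V) (u v : V) : Prop :=
  u ≠ v ∧ ¬ G.Adj u v ∧ KConnected 3 (contractNonEdge G u v)

/-- The set of contractible non-edges of `G`, as unordered pairs of vertices. -/
def contractibleNonEdges (G : SimpleGraph V) : Set (Sym2 V) :=
  {p | ∃ u v : V, p = s(u, v) ∧ IsContractibleNonEdge G u v}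

/-- `S` is a cut of `G`: deleting the vertices of `S` leaves a disconnected graph. -/
def IsCutSet (G : SimpleGraph V) (S : Set V) : Prop :=
  ¬ (G.induce Sᶜ).Preconnected

/-- `C` is the vertex set of a (connected) component of `G − S`. -/
def IsCompOf (G : SimpleGraph V) (S : Set V) (C : Set V) : Prop :=
  C.Nonempty ∧ C ⊆ Sᶜ ∧ (G.induce C).Connected ∧
    ∀ x ∈ C, ∀ y, y ∉ S → G.Adj x y → y ∈ C

private lemma walk_closed {W : Type*} {H : SimpleGraph W} {X : Set W}
    (hX : ∀ ⦃x⦄, x ∈ X → ∀ ⦃y⦄, H.Adj x y → y ∈ X) :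
    ∀ {a b : W}, H.Walk a b → a ∈ X → b ∈ X := by
  intro a b p
  induction p with
  | nil => exact id
  | cons h _ ih => exact fun ha => ih (hX ha h)

private lemma reach_closed {W : Type*} {H : SimpleGraph W} {X : Set W}
    (hX : ∀ ⦃x⦄, x ∈ X → ∀ ⦃y⦄, H.Adj x y → y ∈ X) {a b : W}
    (h : H.Reachable a b) (ha : a ∈ X) : b ∈ X :=
  h.elim fun p => walk_closed hX p ha

private lemma reach_induce_mono (G : SimpleGraph V) {s t : Set V} (hst : s ⊆ t)
    {a b : ↥s} (h : (G.induce s).Reachable a b) :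
    (G.induce t).Reachable ⟨a.1, hst a.2⟩ ⟨b.1, hst b.2⟩ := by
  let f : G.induce s →g G.induce t :=
    { toFun := fun x => ⟨x.1, hst x.2⟩
      map_rel' := fun {x y} h => h }
  exact h.map f

private lemma compOf_unique (G : SimpleGraph V) (S : Set V) {C C' : Set V}
    (hC : IsCompOf G S C) (hC' : IsCompOf G S C') {x : V} (hx : x ∈ C) (hx' : x ∈ C') :
    C = C' := by
  have key : ∀ {A B : Set V}, IsCompOf G S A → IsCompOf G S B → x ∈ A → x ∈ B → A ⊆ B := by
    intro A B hA hB hxA hxB y hy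
    have hr : (G.induce A).Reachable ⟨x, hxA⟩ ⟨y, hy⟩ := hA.2.2.1.preconnected _ _
    exact reach_closed (X := {z : ↥A | z.1 ∈ B})
      (fun z hz w hadj => hB.2.2.2 z.1 hz w.1 (hA.2.1 w.2) hadj) hr hxB
  exact (key hC hC' hx hx').antisymm (key hC' hC hx' hx)

private lemma compOf_exists (G : SimpleGraph V) (S : Set V) {x : V} (hx : x ∈ Sᶜ) :
    ∃ C, IsCompOf G S C ∧ x ∈ C := by
  classical
  set C : Set V := {y | ∃ hy : y ∈ Sᶜ, (G.induce Sᶜ).Reachable ⟨x, hx⟩ ⟨y, hy⟩} with hCdef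
  have hxC : x ∈ C := ⟨hx, Reachable.refl _⟩
  have hCS : C ⊆ Sᶜ := fun y hy => hy.1
  have hcl : ∀ y ∈ C, ∀ z, z ∉ S → G.Adj y z → z ∈ C := by
    intro y hy z hzS hadj
    obtain ⟨hyS, hr⟩ := hy
    exact ⟨hzS, hr.trans (Adj.reachable (by exact hadj : (G.induce Sᶜ).Adj ⟨y, hyS⟩ ⟨z, hzS⟩))⟩
  have step : ∀ {a b : ↥Sᶜ} (_ : (G.induce Sᶜ).Walk a b) (ha : a.1 ∈ C),
      ∃ hb : b.1 ∈ C, (G.induce C).Reachable ⟨a.1, ha⟩ ⟨b.1, hb⟩ := by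
    intro a b p
    induction p with
    | nil => exact fun ha => ⟨ha, Reachable.refl _⟩
    | @cons a a' b h p ih =>
      intro ha
      have ha' : a'.1 ∈ C := hcl a.1 ha a'.1 a'.2 h
      obtain ⟨hb, hr⟩ := ih ha'
      exact ⟨hb, ((by exact h : (G.induce C).Adj ⟨a.1, ha⟩ ⟨a'.1, ha'⟩).reachable).trans hr⟩
  refine ⟨C, ⟨⟨x, hxC⟩, hCS, (connected_iff _).2 ⟨?_, ⟨⟨x, hxC⟩⟩⟩, hcl⟩, hxC⟩
  intro y z
  obtain ⟨hyS, hry⟩ := y.2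
  obtain ⟨hzS, hrz⟩ := z.2
  obtain ⟨py⟩ := hry
  obtain ⟨pz⟩ := hrz
  obtain ⟨hy', ry⟩ := step py hxC
  obtain ⟨hz', rz⟩ := step pz hxC
  exact (ry.symm.trans rz : (G.induce C).Reachable ⟨y.1, hy'⟩ ⟨z.1, hz'⟩)

private lemma key_conn {V : Type*} [Fintype V] (G : SimpleGraph V) (hG : KConnected 3 G)
    (S : Set V) (hS3 : S.ncard = 3)
    (htri : ∀ x ∈ S, ∀ y ∈ S, x ≠ y → G.Adj x y)
    {u v : V} {C1 C2 : Set V} (h1 : IsCompOf G S C1) (h2 : IsCompOf G S C2)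
    (h12 : C1 ≠ C2) (hu : u ∈ C1) (hv : v ∈ C2)
    (R : Set V) (hR3 : R.ncard ≤ 3) (huR : u ∈ R) (hvR : v ∈ R) :
    (G.induce Rᶜ).Connected := by
  classical
  rcases lt_or_eq_of_le hR3 with h3 | h3
  · exact hG.2 R h3
  have huS : u ∉ S := h1.2.1 hu
  have hvS : v ∉ S := h2.2.1 hv
  have hne : u ≠ v := by
    rintro rfl; exact h12 (compOf_unique G S h1 h2 hu hv)
  -- pick w
  obtain ⟨w, hwR, hwuv⟩ : (R \ {u, v}).Nonempty := by
    rw [Set.nonempty_iff_ne_empty]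
    intro hemp
    rw [Set.diff_eq_empty] at hemp
    have hle := Set.ncard_le_ncard hemp (Set.toFinite _)
    have : ({u, v} : Set V).ncard ≤ 2 := by
      calc ({u, v} : Set V).ncard ≤ ({v} : Set V).ncard + 1 := Set.ncard_insert_le _ _
        _ = 2 := by rw [Set.ncard_singleton]
    omega
  have hwu : w ≠ u := fun h => hwuv (Or.inl h)
  have hwv : w ≠ v := fun h => hwuv (Or.inr h)
  have hReq : R = {u, v, w} := by
    refine (Set.eq_of_subset_of_ncard_le ?_ ?_ (Set.toFinite R)).symm
    · intro x hx
      rcases hx with rfl | rfl | rfl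
      exacts [huR, hvR, hwR]
    · have h33 : ({u, v, w} : Set V).ncard = 3 := by
        rw [Set.ncard_insert_of_notMem (by simp [hne, hwu.symm]) (Set.toFinite _),
          Set.ncard_insert_of_notMem (by simp [hwv.symm]) (Set.toFinite _),
          Set.ncard_singleton]
      rw [h33]; omega
  have hmemR : ∀ x, x ∈ R ↔ x = u ∨ x = v ∨ x = w := by
    intro x; rw [hReq]; simp
  -- pick s0 ∈ S, s0 ≠ w
  obtain ⟨s0, hs0S, hs0w⟩ : ∃ s0 ∈ S, s0 ≠ w := by
    by_contra hcon
    push_neg at hcon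
    have : S ⊆ {w} := fun s hs => hcon s hs
    have := Set.ncard_le_ncard this (Set.toFinite _)
    rw [Set.ncard_singleton] at this
    omega
  have hs0R : s0 ∈ Rᶜ := by
    intro h
    rcases (hmemR s0).1 h with rfl | rfl | rfl
    exacts [huS hs0S, hvS hs0S, hs0w rfl]
  suffices hA : ∀ (a : V) (ha : a ∈ Rᶜ), (G.induce Rᶜ).Reachable ⟨a, ha⟩ ⟨s0, hs0R⟩ by
    exact (connected_iff _).2 ⟨fun a b => (hA a.1 a.2).trans (hA b.1 b.2).symm, ⟨⟨s0, hs0R⟩⟩⟩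
  intro a ha
  by_cases haS : a ∈ S
  · rcases eq_or_ne a s0 with rfl | hne'
    · exact Reachable.refl _
    · exact Adj.reachable (by exact htri a haS s0 hs0S hne')
  · obtain ⟨C, hC, haC⟩ := compOf_exists G S (haS : a ∈ Sᶜ)
    set A : Set V := S ∪ R with hAdef
    have haA : a ∈ Aᶜ := by
      intro h; rcases h with h | h
      exacts [haS h, ha h]
    set D : Set V := {d | ∃ hd : d ∈ Aᶜ, (G.induce Aᶜ).Reachable ⟨a, haA⟩ ⟨d, hd⟩} with hDdef
    have haD : a ∈ D := ⟨haA, Reachable.refl _⟩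
    have hDC : D ⊆ C := by
      intro d hd
      obtain ⟨hdA, hr⟩ := hd
      refine reach_closed (X := {x : ↥Aᶜ | x.1 ∈ C}) ?_ hr haC
      intro x hx y hadj
      exact hC.2.2.2 x.1 hx y.1 (fun h => y.2 (Or.inl h)) hadj
    obtain ⟨z, hzuv, hzC⟩ : ∃ z, (z = u ∨ z = v) ∧ z ∉ C := by
      by_cases hcu : u ∈ C
      · refine ⟨v, Or.inr rfl, fun hcv => h12 ?_⟩
        exact (compOf_unique G S h1 hC hu hcu).trans (compOf_unique G S hC h2 hcv hv)
      · exact ⟨u, Or.inl rfl, hcu⟩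
    have hzR : z ∈ R := by rcases hzuv with rfl | rfl; exacts [huR, hvR]
    have hzw : z ≠ w := by rcases hzuv with rfl | rfl; exacts [fun h => hwu h.symm, fun h => hwv h.symm]
    have hclaim : ∃ d ∈ D, ∃ y ∈ S, y ≠ w ∧ G.Adj d y := by
      by_contra hno
      push_neg at hno
      set K : Set V := R \ {z} with hKdef
      have hK2 : K.ncard < 3 := by
        rw [hKdef]
        have := Set.ncard_diff_singleton_lt_of_mem hzR (Set.toFinite R)
        omega
      have hKconn := hG.2 K hK2
      have haK : a ∈ Kᶜ := fun h => ha h.1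
      have hzK : z ∈ Kᶜ := fun h => h.2 rfl
      have hreach := hKconn.preconnected ⟨a, haK⟩ ⟨z, hzK⟩
      have hzD : z ∈ D := by
        refine reach_closed (X := {x : ↥Kᶜ | x.1 ∈ D}) ?_ hreach haD
        intro x hx y hadj
        have hadj' : G.Adj x.1 y.1 := hadj
        by_cases hyS : y.1 ∈ S
        · have hyw : y.1 = w := by
            by_contra hyw
            exact hno x.1 hx y.1 hyS hyw hadj'
          exact absurd (show y.1 ∈ K from ⟨hyw ▸ hwR, fun h => hzw ((Set.mem_singleton_iff.1 h).symm.trans hyw)⟩) y.2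
        · have hyC : y.1 ∈ C := hC.2.2.2 x.1 (hDC hx) y.1 hyS hadj'
          by_cases hyR : y.1 ∈ R
          · have hyz : y.1 = z := by
              by_contra hne'
              exact y.2 ⟨hyR, hne'⟩
            exact absurd (hyz ▸ hyC) hzC
          · have hyA : y.1 ∈ Aᶜ := by
              intro hmem; rcases hmem with h | h
              exacts [hyS h, hyR h]
            obtain ⟨hxA, hr⟩ := hx
            exact ⟨hyA, hr.trans (Adj.reachable (by exact hadj' : (G.induce Aᶜ).Adj ⟨x.1, hxA⟩ ⟨y.1, hyA⟩))⟩
      exact hzC (hDC hzD)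
    obtain ⟨d, hdD, y, hyS, hyw, hadj⟩ := hclaim
    obtain ⟨hdA, hr⟩ := hdD
    have hAR : Aᶜ ⊆ Rᶜ := Set.compl_subset_compl.2 Set.subset_union_right
    have hr' : (G.induce Rᶜ).Reachable ⟨a, hAR haA⟩ ⟨d, hAR hdA⟩ := reach_induce_mono G hAR hr
    have hyR : y ∈ Rᶜ := by
      intro hmem
      rcases (hmemR y).1 hmem with rfl | rfl | rfl
      exacts [huS hyS, hvS hyS, hyw rfl]
    have e1 : (G.induce Rᶜ).Reachable ⟨d, hAR hdA⟩ ⟨y, hyR⟩ := Adj.reachable (by exact hadj)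
    have e2 : (G.induce Rᶜ).Reachable ⟨y, hyR⟩ ⟨s0, hs0R⟩ := by
      rcases eq_or_ne y s0 with rfl | hne'
      · exact Reachable.refl _
      · exact Adj.reachable (by exact htri y hyS s0 hs0S hne')
    exact (hr'.trans e1).trans e2

/-- Let `G` be a finite 3-connected graph and `S` a 3-cut of `G` whose three vertices
are pairwise adjacent in `G`. If `u` and `v` lie in different components of `G − S`,
then `{u, v}` is a contractible non-edge of `G`. -/
theorem stmt14 {V : Type*} [Fintype V] (G : SimpleGraph V) (hG : KConnected 3 G)
    (S : Set V) (hS3 : S.ncard = 3) (hScut : IsCutSet G S)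
    (htri : ∀ x ∈ S, ∀ y ∈ S, x ≠ y → G.Adj x y)
    (u v : V) (C1 C2 : Set V) (h1 : IsCompOf G S C1) (h2 : IsCompOf G S C2)
    (h12 : C1 ≠ C2) (hu : u ∈ C1) (hv : v ∈ C2) :
    IsContractibleNonEdge G u v := by
  classical
  have hne : u ≠ v := by
    rintro rfl; exact h12 (compOf_unique G S h1 h2 hu hv)
  have huS : u ∉ S := h1.2.1 hu
  have hvS : v ∉ S := h2.2.1 hv
  have hnadj : ¬ G.Adj u v := fun h =>
    h12 (compOf_unique G S h1 h2 (h1.2.2.2 u hu v hvS h) hv)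
  have hcard5 : 5 ≤ Nat.card V := by
    have huvS : u ∉ insert v S := by simp [hne, huS]
    have h5 : (insert u (insert v S)).ncard = 5 := by
      rw [Set.ncard_insert_of_notMem huvS (Set.toFinite _),
        Set.ncard_insert_of_notMem hvS (Set.toFinite _), hS3]
    calc 5 = (insert u (insert v S)).ncard := h5.symm
      _ ≤ (Set.univ : Set V).ncard := Set.ncard_le_ncard (Set.subset_univ _) (Set.toFinite _)
      _ = Nat.card V := Set.ncard_univ V
  have hcard' : 3 + 1 ≤ Nat.card {w : V // w ≠ v} := by
    have hcongr : Nat.card {w : V // w ≠ v} = (({v} : Set V)ᶜ).ncard := by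
      rw [← Nat.card_coe_set_eq]
      exact Nat.card_congr (Equiv.subtypeEquivRight (by simp))
    rw [hcongr, Set.compl_eq_univ_diff,
      Set.ncard_diff (Set.subset_univ _) (Set.toFinite _),
      Set.ncard_univ, Set.ncard_singleton]
    omega
  refine ⟨hne, hnadj, hcard', ?_⟩
  intro T hT
  by_cases huT : (⟨u, hne⟩ : {w : V // w ≠ v}) ∈ T
  · -- merged vertex removed
    set R : Set V := insert v (Subtype.val '' T) with hRdef
    have hR3 : R.ncard ≤ 3 := by
      have hins := Set.ncard_insert_le v (Subtype.val '' T)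
      have him : (Subtype.val '' T).ncard = T.ncard :=
        Set.ncard_image_of_injective _ Subtype.coe_injective
      rw [hRdef]
      omega
    have huR : u ∈ R := Set.mem_insert_iff.2 (Or.inr ⟨⟨u, hne⟩, huT, rfl⟩)
    have hvR : v ∈ R := Set.mem_insert _ _
    have hconn := key_conn G hG S hS3 htri h1 h2 h12 hu hv R hR3 huR hvR
    have hmapv : ∀ x : V, x ∈ Rᶜ → x ≠ v := fun x hx h => hx (h ▸ Set.mem_insert _ _)
    have hmemT : ∀ (x : V) (hx : x ∈ Rᶜ), (⟨x, hmapv x hx⟩ : {w : V // w ≠ v}) ∈ Tᶜ := by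
      intro x hx hT'
      exact hx (Set.mem_insert_iff.2 (Or.inr ⟨_, hT', rfl⟩))
    let f : (G.induce Rᶜ) →g ((contractNonEdge G u v).induce Tᶜ) :=
      { toFun := fun x => ⟨⟨x.1, hmapv x.1 x.2⟩, hmemT x.1 x.2⟩
        map_rel' := by
          intro a b hab
          have hab' : G.Adj a.1 b.1 := hab
          exact And.intro (fun h => hab'.ne (by simpa using congrArg Subtype.val h)) (Or.inl hab') }
    have hsurj : Function.Surjective f := by
      intro y
      have hy1 : y.1.1 ∈ Rᶜ := by
        intro hmem
        rcases Set.mem_insert_iff.1 hmem with h | ⟨t, ht, hval⟩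
        · exact y.1.2 h
        · exact y.2 ((Subtype.ext hval : t = y.1) ▸ ht)
      exact ⟨⟨y.1.1, hy1⟩, Subtype.ext (Subtype.ext rfl)⟩
    exact hconn.map f hsurj
  · -- merged vertex kept
    set T' : Set V := Subtype.val '' T with hT'def
    have hT'3 : T'.ncard < 3 := by
      rw [hT'def, Set.ncard_image_of_injective _ Subtype.coe_injective]
      exact hT
    have hconn := hG.2 T' hT'3
    have hvalmem : ∀ (x : V) (hx : x ∈ T'ᶜ) (hxv : x ≠ v),
        (⟨x, hxv⟩ : {w : V // w ≠ v}) ∈ Tᶜ := fun x hx hxv hmem => hx ⟨_, hmem, rfl⟩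
    let f : ↥T'ᶜ → ↥Tᶜ := fun x =>
      if h : x.1 = v then ⟨⟨u, hne⟩, huT⟩ else ⟨⟨x.1, h⟩, hvalmem x.1 x.2 h⟩
    have hhom : ∀ {a b : ↥T'ᶜ}, (G.induce T'ᶜ).Adj a b →
        ((contractNonEdge G u v).induce Tᶜ).Adj (f a) (f b) := by
      intro a b hab
      have hab' : G.Adj a.1 b.1 := hab
      by_cases ha' : a.1 = v <;> by_cases hb' : b.1 = v
      · rw [ha', hb'] at hab'
        exact absurd hab' G.irrefl
      · have hvb : G.Adj v b.1 := by rw [← ha']; exact hab'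
        simp only [f, dif_pos ha', dif_neg hb']
        refine And.intro ?_ (Or.inr (Or.inl ⟨rfl, hvb⟩))
        intro h
        have hub : u = b.1 := congrArg Subtype.val h
        exact hnadj (by rw [hub]; exact hvb.symm)
      · have hav : G.Adj a.1 v := by rw [← hb']; exact hab'
        simp only [f, dif_neg ha', dif_pos hb']
        refine And.intro ?_ (Or.inr (Or.inr ⟨rfl, hav⟩))
        intro h
        have hau : a.1 = u := congrArg Subtype.val h
        exact hnadj (by rw [← hau]; exact hav)
      · simp only [f, dif_neg ha', dif_neg hb']
        exact And.intro (fun h => hab'.ne (by simpa using congrArg Subtype.val h)) (Or.inl hab')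
    have hsurj : Function.Surjective f := by
      intro y
      have hy1 : y.1.1 ∈ T'ᶜ := by
        intro hmem
        obtain ⟨t, ht, hval⟩ := hmem
        exact y.2 ((Subtype.ext hval : t = y.1) ▸ ht)
      refine ⟨⟨y.1.1, hy1⟩, ?_⟩
      show dite _ _ _ = y
      rw [dif_neg y.1.2]
    exact hconn.map ⟨f, hhom⟩ hsurj
end
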